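/- Let ℓ_1,…,ℓ_n be the codeword lengths of a prefix code on {1,…,n} in which every codeword contains at most D ones and which is full, i.e., Σ_{i=1}^n 2^{−ℓ_i} = 1. Then condition (*) holds. -/

import Mathlib

open scoped BigOperators

/-- `Ncount n ℓ j` is the number of indices `i` with `ℓ i = j`. -/
def Ncount (n : ℕ) (ℓ : Fin n → ℕ) (j : ℕ) : ℕ :=
  (Finset.univ.filter fun i => ℓ i = j).card

/-- `Mrec N L j` is the quantity `M_j` defined by `M_j = 0` for `j > L` and
`M_j = ⌈(N_j + M_{j+1}) / 2⌉` for `j ≤ L`. -/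
def Mrec (N : ℕ → ℕ) (L : ℕ) (j : ℕ) : ℕ :=
  if L < j then 0 else (N j + Mrec N L (j + 1) + 1) / 2
termination_by L + 1 - j
decreasing_by omega

open Finset

/-- All boolean lists of length `k`, as a finset. -/
def allB (k : ℕ) : Finset (List Bool) :=
  (Finset.univ : Finset (Fin k → Bool)).image List.ofFn

lemma mem_allB {k : ℕ} {l : List Bool} : l ∈ allB k ↔ l.length = k := by
  constructor
  · intro h
    simp only [allB, Finset.mem_image] at h
    obtain ⟨f, -, rfl⟩ := h
    simp
  · intro h
    simp only [allB, Finset.mem_image]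
    refine ⟨fun p => l.get (Fin.cast h.symm p), Finset.mem_univ _, ?_⟩
    subst h
    exact List.ofFn_get l

lemma card_allB (k : ℕ) : (allB k).card = 2 ^ k := by
  rw [allB, Finset.card_image_of_injective _ List.ofFn_injective]
  simp

/-- Extensions of `s` to length `m`. -/
def ext2 (m : ℕ) (s : List Bool) : Finset (List Bool) :=
  (allB (m - s.length)).image (fun t => s ++ t)

lemma card_ext2 (m : ℕ) (s : List Bool) : (ext2 m s).card = 2 ^ (m - s.length) := by
  rw [ext2, Finset.card_image_of_injective _ (List.append_right_injective s), card_allB]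

lemma mem_ext2 {m : ℕ} {s v : List Bool} (hs : s.length ≤ m) :
    v ∈ ext2 m s ↔ s <+: v ∧ v.length = m := by
  constructor
  · intro h
    simp only [ext2, Finset.mem_image] at h
    obtain ⟨t, ht, rfl⟩ := h
    rw [mem_allB] at ht
    exact ⟨⟨t, rfl⟩, by simp [ht]; omega⟩
  · rintro ⟨⟨t, rfl⟩, hlen⟩
    simp only [ext2, Finset.mem_image]
    refine ⟨t, ?_, rfl⟩
    rw [mem_allB]
    simp at hlen; omega

/-- A full (complete) prefix code is exhaustive: every string is comparable to a codeword. -/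
lemma exists_comparable {n : ℕ} (w : Fin n → List Bool)
    (hpf : ∀ i j, i ≠ j → ¬ (w i <+: w j))
    (hfull : ∑ i : Fin n, (2 : ℝ) ^ (-((w i).length : ℤ)) = 1)
    (u : List Bool) : ∃ i, w i <+: u ∨ u <+: w i := by
  by_contra hc
  push_neg at hc
  set m := max u.length (Finset.univ.sup fun i => (w i).length) with hm
  have hum : u.length ≤ m := le_max_left _ _
  have hwm : ∀ i, (w i).length ≤ m :=
    fun i => le_trans (Finset.le_sup (f := fun i => (w i).length) (Finset.mem_univ i)) (le_max_right _ _)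
  -- the extension sets are pairwise disjoint
  have hdisj : ∀ i ∈ (Finset.univ : Finset (Fin n)), ∀ k ∈ Finset.univ, i ≠ k →
      Disjoint (ext2 m (w i)) (ext2 m (w k)) := by
    intro i _ k _ hik
    rw [Finset.disjoint_left]
    intro v hvi hvk
    rw [mem_ext2 (hwm i)] at hvi
    rw [mem_ext2 (hwm k)] at hvk
    rcases List.prefix_or_prefix_of_prefix hvi.1 hvk.1 with h | h
    · exact hpf i k hik h
    · exact hpf k i hik.symm h
  have hdu : Disjoint (ext2 m u) (Finset.univ.biUnion fun i => ext2 m (w i)) := by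
    rw [Finset.disjoint_left]
    intro v hv hv'
    rw [mem_ext2 hum] at hv
    simp only [Finset.mem_biUnion] at hv'
    obtain ⟨i, -, hvi⟩ := hv'
    rw [mem_ext2 (hwm i)] at hvi
    rcases List.prefix_or_prefix_of_prefix hv.1 hvi.1 with h | h
    · exact (hc i).2 h
    · exact (hc i).1 h
  have hsub : ext2 m u ∪ Finset.univ.biUnion (fun i => ext2 m (w i)) ⊆ allB m := by
    intro v hv
    rw [Finset.mem_union] at hv
    rw [mem_allB]
    rcases hv with hv | hv
    · exact ((mem_ext2 hum).mp hv).2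
    · simp only [Finset.mem_biUnion] at hv
      obtain ⟨i, -, hvi⟩ := hv
      exact ((mem_ext2 (hwm i)).mp hvi).2
  have hcard : 2 ^ (m - u.length) + ∑ i : Fin n, 2 ^ (m - (w i).length) ≤ 2 ^ m := by
    calc 2 ^ (m - u.length) + ∑ i : Fin n, 2 ^ (m - (w i).length)
        = (ext2 m u ∪ Finset.univ.biUnion (fun i => ext2 m (w i))).card := by
          rw [Finset.card_union_of_disjoint hdu, Finset.card_biUnion hdisj, card_ext2]
          congr 1
          exact (Finset.sum_congr rfl fun i _ => (card_ext2 m (w i)).symm)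
      _ ≤ (allB m).card := Finset.card_le_card hsub
      _ = 2 ^ m := card_allB m
  -- transfer to the reals
  have hreal : ∑ i : Fin n, ((2 : ℝ) ^ (m - (w i).length) : ℝ) = 2 ^ m := by
    have : ∀ i : Fin n, ((2 : ℝ) ^ (m - (w i).length) : ℝ)
        = 2 ^ (m : ℤ) * (2 : ℝ) ^ (-((w i).length : ℤ)) := by
      intro i
      rw [← zpow_natCast (2 : ℝ) (m - (w i).length), ← zpow_add₀ (by norm_num : (2:ℝ) ≠ 0)]
      congr 1
      have := hwm i
      omega
    rw [Finset.sum_congr rfl fun i _ => this i, ← Finset.mul_sum, hfull, mul_one]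
    rw [← zpow_natCast (2 : ℝ) m]
  have hcast : (2 : ℝ) ^ (m - u.length) + ∑ i : Fin n, ((2:ℝ) ^ (m - (w i).length)) ≤ 2 ^ m := by
    calc (2 : ℝ) ^ (m - u.length) + ∑ i : Fin n, ((2:ℝ) ^ (m - (w i).length))
        = ((2 ^ (m - u.length) + ∑ i : Fin n, 2 ^ (m - (w i).length) : ℕ) : ℝ) := by push_cast; ring
      _ ≤ ((2 ^ m : ℕ) : ℝ) := by exact_mod_cast Nat.cast_le.mpr hcard
      _ = 2 ^ m := by push_cast; ring
  rw [hreal] at hcast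
  have hpos : (0:ℝ) < 2 ^ (m - u.length) := by positivity
  linarith

/-- Count of `true`s as a filter cardinality over positions. -/
lemma count_eq_card_filter (l : List Bool) :
    l.count true = ((Finset.range l.length).filter fun i => l.getD i false = true).card := by
  induction l using List.reverseRecOn with
  | nil => simp
  | append_singleton l b ih =>
    have h1 : ∀ i ∈ Finset.range l.length,
        (if (l ++ [b]).getD i false = true then 1 else 0)
          = if l.getD i false = true then (1:ℕ) else 0 := by
      intro i hi
      rw [Finset.mem_range] at hi
      rw [List.getD_append _ _ _ _ hi]
    have hidx : l.length < (l ++ [b]).length := by simp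
    have h2 : (l ++ [b]).getD l.length false = b := by
      rw [List.getD_eq_getElem _ _ hidx]
      simp
    rw [List.count_append, List.length_append, List.length_singleton,
        Finset.card_filter, Finset.sum_range_succ, Finset.sum_congr rfl h1, h2,
        ← Finset.card_filter, ← ih, List.count_singleton]
    cases b <;> simp

lemma card_phi {j : ℕ} (l : List Bool) (hl : l.length = j) :
    (Finset.univ.filter fun p : Fin j => l.getD (p : ℕ) false = true).card = l.count true := by
  rw [count_eq_card_filter, hl, Finset.card_filter, Finset.card_filter,
    Fin.sum_univ_eq_sum_range (fun i => if l.getD i false = true then (1:ℕ) else 0) j]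

/-- Codewords of length `j`. -/
def csC {n : ℕ} (w : Fin n → List Bool) (j : ℕ) : Finset (List Bool) :=
  (Finset.univ.filter fun i => (w i).length = j).image w

/-- Proper prefixes of codewords, of length `j`. -/
def csA {n : ℕ} (w : Fin n → List Bool) (j : ℕ) : Finset (List Bool) :=
  (Finset.univ.filter fun i => j < (w i).length).image (fun i => (w i).take j)

lemma mem_csC {n : ℕ} {w : Fin n → List Bool} {j : ℕ} {v : List Bool} :
    v ∈ csC w j ↔ ∃ i, (w i).length = j ∧ w i = v := by simp [csC]

lemma mem_csA {n : ℕ} {w : Fin n → List Bool} {j : ℕ} {v : List Bool} :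
    v ∈ csA w j ↔ ∃ i, j < (w i).length ∧ (w i).take j = v := by simp [csA]

lemma length_mem_union {n : ℕ} {w : Fin n → List Bool} {j : ℕ} {v : List Bool}
    (hv : v ∈ csC w j ∪ csA w j) : v.length = j := by
  rw [Finset.mem_union] at hv
  rcases hv with hv | hv
  · obtain ⟨i, hi, rfl⟩ := mem_csC.mp hv; exact hi
  · obtain ⟨i, hi, rfl⟩ := mem_csA.mp hv; rw [List.length_take]; omega

lemma disjoint_csC_csA {n : ℕ} (w : Fin n → List Bool)
    (hpf : ∀ i j, i ≠ j → ¬ (w i <+: w j)) (j : ℕ) :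
    Disjoint (csC w j) (csA w j) := by
  rw [Finset.disjoint_left]
  intro v hvC hvA
  obtain ⟨i, hi, hiv⟩ := mem_csC.mp hvC
  obtain ⟨k, hk, hkv⟩ := mem_csA.mp hvA
  have hik : i ≠ k := by intro h; subst h; omega
  have h1 : w i = (w k).take j := by rw [hiv, ← hkv]
  exact hpf i k hik (by rw [h1]; exact List.take_prefix j (w k))

lemma two_fiber {j : ℕ} (S : Finset (List Bool)) (hlen : ∀ v ∈ S, v.length = j + 1) :
    ∀ b ∈ S.image (fun v => v.take j), (S.filter fun v => v.take j = b).card ≤ 2 := by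
  intro b _
  have h2 : ((Finset.univ : Finset Bool)).card = 2 := by simp
  rw [← h2]
  apply Finset.card_le_card_of_injOn (fun v => v.getD j false) (fun a _ => Finset.mem_univ _)
  intro v1 hv1 v2 hv2 heq
  simp only [Finset.coe_filter, Set.mem_setOf_eq] at hv1 hv2
  obtain ⟨hv1S, hv1t⟩ := hv1
  obtain ⟨hv2S, hv2t⟩ := hv2
  have l1 := hlen v1 hv1S
  have l2 := hlen v2 hv2S
  have hteq : v1.take j = v2.take j := by rw [hv1t, hv2t]
  apply List.ext_getElem (by omega)
  intro p hp1 hp2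
  rcases Nat.lt_or_ge p j with hp | hp
  · have e1 : v1[p] = (v1.take j)[p]'(by rw [List.length_take]; omega) :=
      List.getElem_take.symm
    have e2 : v2[p] = (v2.take j)[p]'(by rw [List.length_take]; omega) :=
      List.getElem_take.symm
    rw [e1, e2]
    congr 1
  · have hpj : p = j := by omega
    subst hpj
    have e1 : v1.getD p false = v1[p] := List.getD_eq_getElem _ _ hp1
    have e2 : v2.getD p false = v2[p] := List.getD_eq_getElem _ _ hp2
    rw [← e1, ← e2]
    exact heq

lemma csA_step {n : ℕ} (w : Fin n → List Bool)
    (hpf : ∀ i j, i ≠ j → ¬ (w i <+: w j)) (j : ℕ) :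
    (csC w (j+1)).card + (csA w (j+1)).card ≤ 2 * (csA w j).card := by
  classical
  set S := csC w (j+1) ∪ csA w (j+1) with hS
  have hlen : ∀ v ∈ S, v.length = j + 1 := fun v hv => length_mem_union hv
  have himg : S.image (fun v => v.take j) ⊆ csA w j := by
    intro b hb
    rw [Finset.mem_image] at hb
    obtain ⟨v, hv, rfl⟩ := hb
    rw [hS, Finset.mem_union] at hv
    rcases hv with hv | hv
    · obtain ⟨i, hi, rfl⟩ := mem_csC.mp hv
      exact mem_csA.mpr ⟨i, by omega, rfl⟩
    · obtain ⟨i, hi, rfl⟩ := mem_csA.mp hv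
      refine mem_csA.mpr ⟨i, by omega, ?_⟩
      rw [List.take_take]
      congr 1
      omega
  calc (csC w (j+1)).card + (csA w (j+1)).card = S.card :=
        (Finset.card_union_of_disjoint (disjoint_csC_csA w hpf (j+1))).symm
    _ ≤ 2 * (S.image (fun v => v.take j)).card :=
        Finset.card_le_mul_card_image S 2 (two_fiber S hlen)
    _ ≤ 2 * (csA w j).card := Nat.mul_le_mul_left 2 (Finset.card_le_card himg)

lemma mrec_le_csA {n : ℕ} (w : Fin n → List Bool)
    (hpf : ∀ i j, i ≠ j → ¬ (w i <+: w j)) (L : ℕ)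
    (hN : ∀ m, (csC w m).card = Ncount n (fun i => (w i).length) m) :
    ∀ k j, L ≤ j + k → Mrec (Ncount n (fun i => (w i).length)) L (j+1) ≤ (csA w j).card := by
  intro k
  induction k with
  | zero =>
    intro j hj
    rw [Mrec, if_pos (by omega)]
    exact Nat.zero_le _
  | succ k ih =>
    intro j hj
    by_cases hLj : L < j + 1
    · rw [Mrec, if_pos hLj]; exact Nat.zero_le _
    · rw [Mrec, if_neg hLj]
      have h1 := ih (j+1) (by omega)
      have h2 := csA_step w hpf j
      rw [hN (j+1)] at h2
      omega

lemma last_true {n D : ℕ} (w : Fin n → List Bool)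
    (hpf : ∀ i j, i ≠ j → ¬ (w i <+: w j))
    (hones : ∀ i, (w i).count true ≤ D)
    (hfull : ∑ i : Fin n, (2 : ℝ) ^ (-((w i).length : ℤ)) = 1)
    {j : ℕ} (hj : 1 ≤ j) {v : List Bool}
    (hv : v ∈ csC w j ∪ csA w j) (hcnt : v.count true = D) :
    v.getD (j-1) false = true := by
  by_contra hb
  have hlen : v.length = j := length_mem_union hv
  have hfalse : v.getD (j-1) false = false := by
    cases h : v.getD (j-1) false
    · rfl
    · exact absurd h hb
  set t := v.take (j-1) with ht
  have htl : t.length = j - 1 := by rw [ht, List.length_take]; omega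
  have hidx : j - 1 < v.length := by omega
  have hgf : v[j-1]'hidx = false := by
    rw [← List.getD_eq_getElem v false hidx]; exact hfalse
  have h2 : v.take ((j-1)+1) = t ++ [false] := by
    rw [List.take_succ, List.getElem?_eq_getElem hidx, hgf]
    rfl
  have h1 : v.take ((j-1)+1) = v := by
    have h3 : (j-1)+1 = j := by omega
    rw [h3, ← hlen, List.take_length]
  have hvt : v = t ++ [false] := by rw [← h1, h2]
  have hct : t.count true = D := by
    rw [hvt, List.count_append] at hcnt
    simpa using hcnt
  set u := t ++ [true] with hu
  have hcu : u.count true = D + 1 := by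
    rw [hu, List.count_append, hct]
    simp
  have hul : u.length = j := by rw [hu, List.length_append, htl]; simp; omega
  obtain ⟨i, hcase⟩ := exists_comparable w hpf hfull u
  rcases hcase with hpre | hpre
  · -- w i <+: u
    have hli : (w i).length ≤ j := hul ▸ hpre.length_le
    rcases Nat.eq_or_lt_of_le hli with heq | hlt
    · have hwu : w i = u := hpre.eq_of_length (by omega)
      have hcontra := hones i
      rw [hwu, hcu] at hcontra
      omega
    · have hti : w i <+: t :=
        List.prefix_of_prefix_length_le hpre (List.prefix_append t [true]) (by omega)
      have htv : t <+: v := by rw [hvt]; exact List.prefix_append t [false]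
      have hiv : w i <+: v := hti.trans htv
      rw [Finset.mem_union] at hv
      rcases hv with hvc | hva
      · obtain ⟨k, hk, hkv⟩ := mem_csC.mp hvc
        have hik : i ≠ k := by intro h; subst h; omega
        exact hpf i k hik (by rw [hkv]; exact hiv)
      · obtain ⟨k, hk, hkv⟩ := mem_csA.mp hva
        have hik : i ≠ k := by intro h; subst h; omega
        have : w i <+: w k := hiv.trans (by rw [← hkv]; exact List.take_prefix j (w k))
        exact hpf i k hik this
  · -- u <+: w i
    have hcontra := hones i
    have := hpre.count_le true
    omega

lemma union_card_le {n D : ℕ} (w : Fin n → List Bool)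
    (hpf : ∀ i j, i ≠ j → ¬ (w i <+: w j))
    (hones : ∀ i, (w i).count true ≤ D)
    (hfull : ∑ i : Fin n, (2 : ℝ) ^ (-((w i).length : ℤ)) = 1)
    (hD : 1 ≤ D) {j : ℕ} (hj : 1 ≤ j) :
    (csC w j ∪ csA w j).card ≤ (∑ i ∈ Finset.range D, j.choose i) + (j - 1).choose (D - 1) := by
  classical
  set x0 : Fin j := ⟨j - 1, by omega⟩ with hx0
  set T1 : Finset (Finset (Fin j)) :=
    Finset.univ.powerset.filter (fun S => S.card < D) with hT1def
  set T2 : Finset (Finset (Fin j)) :=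
    Finset.univ.powerset.filter (fun S => S.card = D ∧ x0 ∈ S) with hT2def
  set φ : List Bool → Finset (Fin j) :=
    fun v => Finset.univ.filter (fun p : Fin j => v.getD (p : ℕ) false = true) with hφ
  -- count bound for members
  have hcnt : ∀ v ∈ csC w j ∪ csA w j, v.count true ≤ D := by
    intro v hv
    rw [Finset.mem_union] at hv
    rcases hv with hv | hv
    · obtain ⟨i, hi, rfl⟩ := mem_csC.mp hv; exact hones i
    · obtain ⟨i, hi, rfl⟩ := mem_csA.mp hv
      exact le_trans ((List.take_prefix j (w i)).count_le true) (hones i)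
  -- φ maps into T1 ∪ T2
  have hmaps : ∀ v ∈ csC w j ∪ csA w j, φ v ∈ T1 ∪ T2 := by
    intro v hv
    have hlen : v.length = j := length_mem_union hv
    have hcard : (φ v).card = v.count true := card_phi v hlen
    rcases Nat.lt_or_ge (v.count true) D with hlt | hge
    · apply Finset.mem_union_left
      rw [hT1def, Finset.mem_filter]
      exact ⟨Finset.mem_powerset.mpr (Finset.subset_univ _), by omega⟩
    · have heq : v.count true = D := le_antisymm (hcnt v hv) hge
      apply Finset.mem_union_right
      rw [hT2def, Finset.mem_filter]
      refine ⟨Finset.mem_powerset.mpr (Finset.subset_univ _), by omega, ?_⟩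
      rw [hφ]
      simp only [Finset.mem_filter, Finset.mem_univ, true_and]
      exact last_true w hpf hones hfull hj hv heq
  -- φ is injective on the union
  have hinj : Set.InjOn φ ↑(csC w j ∪ csA w j) := by
    intro v1 hv1 v2 hv2 heq
    have l1 : v1.length = j := length_mem_union hv1
    have l2 : v2.length = j := length_mem_union hv2
    apply List.ext_getElem (by omega)
    intro p hp1 hp2
    have hp : p < j := by omega
    have hiff : (v1.getD p false = true) ↔ (v2.getD p false = true) := by
      have h := Finset.ext_iff.mp heq ⟨p, hp⟩
      rw [hφ] at h
      simpa using h
    rw [← List.getD_eq_getElem v1 false hp1, ← List.getD_eq_getElem v2 false hp2]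
    cases h1 : v1.getD p false <;> cases h2 : v2.getD p false
    · rfl
    · rw [h1, h2] at hiff; simp at hiff
    · rw [h1, h2] at hiff; simp at hiff
    · rfl
  have hstep : (csC w j ∪ csA w j).card ≤ (T1 ∪ T2).card :=
    Finset.card_le_card_of_injOn φ hmaps hinj
  -- card of T1
  have hT1card : T1.card = ∑ i ∈ Finset.range D, j.choose i := by
    have hrw : T1 = (Finset.range D).biUnion
        (fun i => Finset.powersetCard i (Finset.univ : Finset (Fin j))) := by
      ext S
      simp only [hT1def, Finset.mem_filter, Finset.mem_powerset, Finset.mem_biUnion,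
        Finset.mem_range, Finset.mem_powersetCard]
      constructor
      · rintro ⟨hsub, hcd⟩; exact ⟨S.card, hcd, hsub, rfl⟩
      · rintro ⟨i, hi, hsub, rfl⟩; exact ⟨hsub, hi⟩
    rw [hrw, Finset.card_biUnion]
    · refine Finset.sum_congr rfl fun i _ => ?_
      rw [Finset.card_powersetCard, Finset.card_univ, Fintype.card_fin]
    · intro a _ b _ hab
      simp only [Function.onFun]
      rw [Finset.disjoint_left]
      intro S hSa hSb
      rw [Finset.mem_powersetCard] at hSa hSb
      exact hab (hSa.2.symm.trans hSb.2)
  -- card of T2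
  have hT2card : T2.card = (j - 1).choose (D - 1) := by
    have hbij : T2.card =
        (Finset.powersetCard (D-1) ((Finset.univ : Finset (Fin j)).erase x0)).card := by
      refine Finset.card_bij' (fun S _ => S.erase x0) (fun S _ => insert x0 S)
        ?hi ?hj ?left ?right
      case hi =>
        intro S hS
        rw [hT2def, Finset.mem_filter, Finset.mem_powerset] at hS
        obtain ⟨hsub, hcard, hx0S⟩ := hS
        rw [Finset.mem_powersetCard]
        exact ⟨Finset.erase_subset_erase x0 hsub,
          by rw [Finset.card_erase_of_mem hx0S, hcard]⟩
      case hj =>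
        intro S hS
        rw [Finset.mem_powersetCard] at hS
        obtain ⟨hsub, hcard⟩ := hS
        have hx0S : x0 ∉ S := fun h => (Finset.mem_erase.mp (hsub h)).1 rfl
        rw [hT2def, Finset.mem_filter, Finset.mem_powerset]
        exact ⟨Finset.subset_univ _,
          by rw [Finset.card_insert_of_notMem hx0S, hcard]; omega,
          Finset.mem_insert_self _ _⟩
      case left =>
        intro S hS
        rw [hT2def, Finset.mem_filter] at hS
        exact Finset.insert_erase hS.2.2
      case right =>
        intro S hS
        rw [Finset.mem_powersetCard] at hS
        exact Finset.erase_insert (fun h => (Finset.mem_erase.mp (hS.1 h)).1 rfl)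
    rw [hbij, Finset.card_powersetCard, Finset.card_erase_of_mem (Finset.mem_univ _),
      Finset.card_univ, Fintype.card_fin]
  calc (csC w j ∪ csA w j).card ≤ (T1 ∪ T2).card := hstep
    _ ≤ T1.card + T2.card := Finset.card_union_le T1 T2
    _ = (∑ i ∈ Finset.range D, j.choose i) + (j - 1).choose (D - 1) := by
        rw [hT1card, hT2card]

/-- **Lemma 3 (necessity of the Kraft-like condition for full codes).** If `ℓ_1,…,ℓ_n`
are the codeword lengths of a prefix code in which every codeword contains at most `D`
ones and whose tree representation is a full binary tree (i.e. `∑ 2^{-ℓ_i} = 1`), then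
for all `1 ≤ j ≤ L` (with `L = max_i ℓ_i`) it holds that
`N_j + M_{j+1} ≤ ∑_{i=0}^{D-1} C(j,i) + C(j-1,D-1)`. -/
theorem condition_of_full_prefix_code
    (n D : ℕ) (hD : 1 ≤ D) (w : Fin n → List Bool)
    (hpf : ∀ i j, i ≠ j → ¬ (w i <+: w j))
    (hones : ∀ i, (w i).count true ≤ D)
    (hfull : ∑ i : Fin n, (2 : ℝ) ^ (-((w i).length : ℤ)) = 1) :
    ∀ j : ℕ, 1 ≤ j → j ≤ Finset.univ.sup (fun i => (w i).length) →
      Ncount n (fun i => (w i).length) j +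
        Mrec (Ncount n (fun i => (w i).length))
          (Finset.univ.sup (fun i => (w i).length)) (j + 1) ≤
        (∑ i ∈ Finset.range D, j.choose i) + (j - 1).choose (D - 1) := by
  intro j hj1 hjL
  classical
  have hwinj : Function.Injective w := by
    intro i k hik
    by_contra hne
    refine hpf i k hne ?_
    rw [hik]
  have hN : ∀ m, (csC w m).card = Ncount n (fun i => (w i).length) m := by
    intro m
    rw [csC, Finset.card_image_of_injective _ hwinj, Ncount]
  have hM := mrec_le_csA w hpf (Finset.univ.sup fun i => (w i).length) hN
    (Finset.univ.sup fun i => (w i).length) j (by omega)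
  have hfinal := union_card_le w hpf hones hfull hD hj1 (j := j)
  rw [Finset.card_union_of_disjoint (disjoint_csC_csA w hpf j), hN j] at hfinal
  omega
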